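/- Let {Q_n} be a sequence of orthogonal polynomials with respect to a matrix weight W and with respect to a matrix weight V, both of size N. If the zeroth moments agree, ∫ W(x) dx = ∫ V(x) dx, then all moments agree: ∫ x^n W(x) dx = ∫ x^n V(x) dx for every n ∈ ℕ. If moreover both weights have compact support, then W = V almost everywhere. -/

import Mathlib

open MeasureTheory Matrix
open scoped ComplexOrder

noncomputable section

/-- The set of real points strictly between the extended-real endpoints `a` and `b`. -/
def weightSupport (a b : EReal) : Set ℝ := {x : ℝ | a < (x : EReal) ∧ (x : EReal) < b}

variable {I : Type} [Fintype I] [DecidableEq I]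
variable {I' : Type} [Fintype I'] [DecidableEq I']

/-- Entrywise integral of a matrix-valued function over a set. -/
def matIntegral (S : Set ℝ) (F : ℝ → Matrix I I ℂ) : Matrix I I ℂ :=
  Matrix.of fun i j => ∫ x in S, F x i j

/-- `W` is a matrix weight on the (nondegenerate) interval `(a,b)`. -/
def IsMatrixWeight (a b : EReal) (W : ℝ → Matrix I I ℂ) : Prop :=
  a < b ∧
  (∀ x ∈ weightSupport a b, (W x).PosSemidef) ∧
  (∀ᵐ x : ℝ ∂(volume.restrict (weightSupport a b)), (W x).PosDef) ∧
  (∀ n : ℕ, ∀ i j, IntegrableOn (fun x : ℝ => (x : ℂ) ^ n * W x i j) (weightSupport a b))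

/-- Equivalence of matrix weights: `W' = M W M*` for a nonsingular `M`. -/
def WeightEquiv (a b : EReal) (W : ℝ → Matrix I I ℂ) (W' : ℝ → Matrix I' I' ℂ) : Prop :=
  ∃ (M : Matrix I' I ℂ) (M' : Matrix I I' ℂ), M * M' = 1 ∧ M' * M = 1 ∧
    ∀ x ∈ weightSupport a b, W' x = M * W x * Mᴴ

/-- Unitary equivalence of matrix weights. -/
def UnitaryWeightEquiv (a b : EReal) (W : ℝ → Matrix I I ℂ) (W' : ℝ → Matrix I' I' ℂ) : Prop :=
  ∃ M : Matrix I' I ℂ, M * Mᴴ = 1 ∧ Mᴴ * M = 1 ∧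
    ∀ x ∈ weightSupport a b, W' x = M * W x * Mᴴ

/-- `W` reduces: it is equivalent to a direct sum of two matrix weights of smaller size. -/
def Reduces (a b : EReal) (W : ℝ → Matrix I I ℂ) : Prop :=
  ∃ (N₁ N₂ : ℕ) (W₁ : ℝ → Matrix (Fin N₁) (Fin N₁) ℂ) (W₂ : ℝ → Matrix (Fin N₂) (Fin N₂) ℂ),
    0 < N₁ ∧ 0 < N₂ ∧ N₁ + N₂ = Fintype.card I ∧
    IsMatrixWeight a b W₁ ∧ IsMatrixWeight a b W₂ ∧
    WeightEquiv a b W (fun x => Matrix.fromBlocks (W₁ x) 0 0 (W₂ x))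

/-- The real vector space `C_ℝ` of a matrix weight. -/
def CR (a b : EReal) (W : ℝ → Matrix I I ℂ) : Set (Matrix I I ℂ) :=
  {T | ∀ᵐ x ∂(volume.restrict (weightSupport a b)), T * W x = W x * Tᴴ}

/-- Evaluation of a matrix polynomial at a real point. -/
def polyEval (p : Polynomial (Matrix I I ℂ)) (x : ℝ) : Matrix I I ℂ :=
  p.eval ((x : ℂ) • (1 : Matrix I I ℂ))

/-- A sequence of orthogonal polynomials with respect to `W`:  `Q n` has degree `n` with
nonsingular leading coefficient, and distinct members are orthogonal. -/
def IsOPS (a b : EReal) (W : ℝ → Matrix I I ℂ) (Q : ℕ → Polynomial (Matrix I I ℂ)) : Prop :=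
  (∀ n, (Q n).natDegree = n ∧ IsUnit ((Q n).coeff n)) ∧
  ∀ n m, n ≠ m →
    matIntegral (weightSupport a b) (fun x => polyEval (Q n) x * W x * (polyEval (Q m) x)ᴴ) = 0

/-- The sequence of monic orthogonal polynomials with respect to `W`. -/
def IsMonicOPS (a b : EReal) (W : ℝ → Matrix I I ℂ) (P : ℕ → Polynomial (Matrix I I ℂ)) : Prop :=
  (∀ n, (P n).Monic ∧ (P n).natDegree = n) ∧
  ∀ n m, n ≠ m →
    matIntegral (weightSupport a b) (fun x => polyEval (P n) x * W x * (polyEval (P m) x)ᴴ) = 0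

end


namespace Stmt18

open MeasureTheory Matrix Polynomial Finset

variable {N : ℕ}

lemma polyEval_eq (p : Polynomial (Matrix (Fin N) (Fin N) ℂ)) (x : ℝ) :
    polyEval p x = ∑ k ∈ Finset.range (p.natDegree + 1), ((x : ℂ) ^ k) • p.coeff k := by
  rw [polyEval, Polynomial.eval_eq_sum_range]
  refine Finset.sum_congr rfl fun k _ => ?_
  rw [_root_.smul_pow, one_pow, mul_smul_comm, mul_one]

lemma polyEval_mul_entry (p : Polynomial (Matrix (Fin N) (Fin N) ℂ))
    (W : ℝ → Matrix (Fin N) (Fin N) ℂ) (x : ℝ) (i j : Fin N) :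
    (polyEval p x * W x) i j
      = ∑ k ∈ Finset.range (p.natDegree + 1), ∑ l, p.coeff k i l * ((x : ℂ) ^ k * W x l j) := by
  rw [polyEval_eq, Finset.sum_mul, Matrix.sum_apply]
  refine Finset.sum_congr rfl fun k _ => ?_
  rw [Matrix.mul_apply]
  refine Finset.sum_congr rfl fun l _ => ?_
  simp only [Matrix.smul_apply, smul_eq_mul]
  ring

lemma integrable_polyEval_mul {S : Set ℝ} {W : ℝ → Matrix (Fin N) (Fin N) ℂ}
    (h4 : ∀ n : ℕ, ∀ i j, IntegrableOn (fun x : ℝ => (x : ℂ) ^ n * W x i j) S)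
    (p : Polynomial (Matrix (Fin N) (Fin N) ℂ)) (i j : Fin N) :
    IntegrableOn (fun x : ℝ => (polyEval p x * W x) i j) S := by
  simp only [polyEval_mul_entry]
  exact integrable_finset_sum _ fun k _ =>
    integrable_finset_sum _ fun l _ => (h4 k l j).const_mul _

lemma matIntegral_polyEval_mul {S : Set ℝ} {W : ℝ → Matrix (Fin N) (Fin N) ℂ}
    (h4 : ∀ n : ℕ, ∀ i j, IntegrableOn (fun x : ℝ => (x : ℂ) ^ n * W x i j) S)
    (p : Polynomial (Matrix (Fin N) (Fin N) ℂ)) :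
    matIntegral S (fun x => polyEval p x * W x)
      = ∑ k ∈ Finset.range (p.natDegree + 1),
          p.coeff k * matIntegral S (fun x => ((x : ℂ) ^ k) • W x) := by
  ext i j
  simp only [matIntegral, Matrix.of_apply]
  simp only [polyEval_mul_entry]
  rw [MeasureTheory.integral_finset_sum _ (fun k _ =>
    integrable_finset_sum _ fun l _ => ((h4 k l j).const_mul _))]
  simp only [Matrix.sum_apply, Matrix.mul_apply, Matrix.of_apply]
  refine Finset.sum_congr rfl fun k _ => ?_
  rw [MeasureTheory.integral_finset_sum _ (fun l _ => ((h4 k l j).const_mul _))]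
  refine Finset.sum_congr rfl fun l _ => ?_
  rw [MeasureTheory.integral_const_mul]
  congr 1

lemma matIntegral_mul_const {S : Set ℝ} {F : ℝ → Matrix (Fin N) (Fin N) ℂ}
    (hF : ∀ i j, IntegrableOn (fun x => F x i j) S) (A : Matrix (Fin N) (Fin N) ℂ) :
    matIntegral S (fun x => F x * A) = matIntegral S F * A := by
  ext i j
  simp only [matIntegral, Matrix.of_apply, Matrix.mul_apply]
  rw [MeasureTheory.integral_finset_sum _ (fun l _ => (hF i l).mul_const _)]
  refine Finset.sum_congr rfl fun l _ => ?_
  rw [MeasureTheory.integral_mul_const]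

lemma ops_moment_rel {a b : EReal} {W : ℝ → Matrix (Fin N) (Fin N) ℂ}
    (hW : IsMatrixWeight a b W) {Q : ℕ → Polynomial (Matrix (Fin N) (Fin N) ℂ)}
    (hQ : IsOPS a b W Q) {n : ℕ} (hn : n ≠ 0) :
    ∑ k ∈ Finset.range (n + 1),
      (Q n).coeff k * matIntegral (weightSupport a b) (fun x => ((x : ℂ) ^ k) • W x) = 0 := by
  have h4 := hW.2.2.2
  have horth := hQ.2 n 0 hn
  have hQ0 : ∀ x : ℝ, polyEval (Q 0) x = (Q 0).coeff 0 := by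
    intro x
    have h := (Polynomial.eq_C_coeff_zero_iff_natDegree_eq_zero).mpr (hQ.1 0).1
    rw [polyEval]
    conv_lhs => rw [h]
    simp
  have heq : (fun x => polyEval (Q n) x * W x * (polyEval (Q 0) x)ᴴ)
      = fun x => (polyEval (Q n) x * W x) * ((Q 0).coeff 0)ᴴ := by
    funext x; rw [hQ0]
  rw [heq, matIntegral_mul_const (fun i j => integrable_polyEval_mul h4 (Q n) i j)] at horth
  have hu : IsUnit (((Q 0).coeff 0)ᴴ) := (Matrix.isUnit_conjTranspose _).mpr (hQ.1 0).2
  have hzero : matIntegral (weightSupport a b) (fun x => polyEval (Q n) x * W x) = 0 := by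
    refine hu.mul_right_cancel ?_
    rw [horth, zero_mul]
  rw [matIntegral_polyEval_mul h4, (hQ.1 n).1] at hzero
  exact hzero

/-- Part 1: all moments agree. -/
lemma moments_eq {a b c d : EReal} {W V : ℝ → Matrix (Fin N) (Fin N) ℂ}
    (hW : IsMatrixWeight a b W) (hV : IsMatrixWeight c d V)
    {Q : ℕ → Polynomial (Matrix (Fin N) (Fin N) ℂ)}
    (hQW : IsOPS a b W Q) (hQV : IsOPS c d V Q)
    (h0 : matIntegral (weightSupport a b) W = matIntegral (weightSupport c d) V) :
    ∀ n : ℕ,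
      matIntegral (weightSupport a b) (fun x => ((x : ℂ) ^ n) • W x) =
        matIntegral (weightSupport c d) (fun x => ((x : ℂ) ^ n) • V x) := by
  intro n
  induction n using Nat.strong_induction_on with
  | _ n ih =>
    match n with
    | 0 =>
      simpa only [pow_zero, one_smul] using h0
    | (m + 1) =>
      have hw := ops_moment_rel hW hQW (n := m + 1) (Nat.succ_ne_zero m)
      have hv := ops_moment_rel hV hQV (n := m + 1) (Nat.succ_ne_zero m)
      rw [Finset.sum_range_succ] at hw hv
      have hlow : ∑ k ∈ Finset.range (m + 1),
          (Q (m + 1)).coeff k * matIntegral (weightSupport a b) (fun x => ((x : ℂ) ^ k) • W x)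
          = ∑ k ∈ Finset.range (m + 1),
          (Q (m + 1)).coeff k * matIntegral (weightSupport c d) (fun x => ((x : ℂ) ^ k) • V x) :=
        Finset.sum_congr rfl fun k hk => by rw [ih k (Finset.mem_range.mp hk)]
      have hcancel : (Q (m + 1)).coeff (m + 1) *
            matIntegral (weightSupport a b) (fun x => ((x : ℂ) ^ (m + 1)) • W x)
          = (Q (m + 1)).coeff (m + 1) *
            matIntegral (weightSupport c d) (fun x => ((x : ℂ) ^ (m + 1)) • V x) := by
        have h := hw.trans hv.symm
        rw [hlow] at h
        exact add_left_cancel h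
      exact ((hQW.1 (m + 1)).2).mul_left_cancel hcancel

lemma weightSupport_coe (a b : ℝ) : weightSupport (a : EReal) (b : EReal) = Set.Ioo a b := by
  ext x
  simp [weightSupport, Set.mem_Ioo, EReal.coe_lt_coe_iff]

/-- Key analytic fact: an integrable compactly supported function all of whose moments
vanish is a.e. zero. -/
lemma vanish_of_moments {g : ℝ → ℂ} (hg : Integrable g) {m M : ℝ}
    (hsupp : ∀ x, x ∉ Set.Icc m M → g x = 0)
    (hmom : ∀ n : ℕ, (∫ x : ℝ, (x : ℂ) ^ n * g x) = 0) :
    ∀ᵐ x : ℝ, g x = 0 := by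
  -- every continuous multiplier yields an integrable product
  have hint : ∀ h : ℝ → ℂ, Continuous h → Integrable (fun x => h x * g x) := by
    intro h hc
    have heq : (fun x => h x * g x) = fun x => (Set.Icc m M).indicator h x * g x := by
      funext x
      by_cases hx : x ∈ Set.Icc m M
      · simp [hx]
      · simp [hx, hsupp x hx]
    rw [heq]
    refine (fun ⟨C', hC'⟩ => Integrable.bdd_mul (c := C') hg ((hc.aestronglyMeasurable).indicator measurableSet_Icc) (Filter.Eventually.of_forall hC') : (∃ C' : ℝ, ∀ x, ‖(Set.Icc m M).indicator h x‖ ≤ C') → _) ?_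
    obtain ⟨C, hC⟩ := isCompact_Icc.exists_bound_of_continuousOn (hc.continuousOn (s := Set.Icc m M))
    refine ⟨max C 0, fun x => ?_⟩
    by_cases hx : x ∈ Set.Icc m M
    · simp only [Set.indicator_of_mem hx]
      exact le_max_of_le_left (hC x hx)
    · simp [Set.indicator_of_notMem hx]
  -- vanishing against all polynomials
  have hpoly : ∀ p : Polynomial ℝ, (∫ x : ℝ, ((p.eval x : ℝ) : ℂ) * g x) = 0 := by
    intro p
    have heq : (fun x : ℝ => ((p.eval x : ℝ) : ℂ) * g x)
        = fun x : ℝ => ∑ k ∈ Finset.range (p.natDegree + 1),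
            ((p.coeff k : ℝ) : ℂ) * ((x : ℂ) ^ k * g x) := by
      funext x
      rw [Polynomial.eval_eq_sum_range]
      push_cast
      rw [Finset.sum_mul]
      exact Finset.sum_congr rfl fun k _ => by ring
    rw [heq, MeasureTheory.integral_finset_sum _ (fun k _ => ((hint _ (by continuity)).const_mul _))]
    refine Finset.sum_eq_zero fun k _ => ?_
    rw [MeasureTheory.integral_const_mul, hmom k, mul_zero]
  -- conclude via smooth test functions
  refine ae_eq_zero_of_integral_contDiff_smul_eq_zero hg.locallyIntegrable ?_
  intro φ hφ hφc
  have hφcont : Continuous φ := hφ.continuous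
  -- choose a big interval containing both supports
  obtain ⟨r, hr⟩ := hφc.isBounded.subset_closedBall 0
  set A : ℝ := min m (-(|r| + 1)) with hA
  set B : ℝ := max M (|r| + 1) with hB
  have habs := le_abs_self r
  have habs' := abs_nonneg r
  have hsubK : Set.Icc m M ⊆ Set.Icc A B :=
    Set.Icc_subset_Icc (min_le_left _ _) (le_max_left _ _)
  have hφK : ∀ x, x ∉ Set.Icc A B → φ x = 0 := by
    intro x hx
    refine image_eq_zero_of_notMem_tsupport fun hmem => hx ?_
    have h1 := hr hmem
    rw [Real.closedBall_eq_Icc, zero_sub, zero_add] at h1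
    constructor
    · exact le_trans (le_trans (min_le_right _ _) (by linarith)) h1.1
    · exact le_trans h1.2 (le_trans (by linarith) (le_max_right _ _))
  have hsmul : ∀ (h : ℝ → ℝ), Continuous h → Integrable (fun x => h x • g x) := by
    intro h hc
    have : (fun x => h x • g x) = fun x => ((h x : ℝ) : ℂ) * g x := by
      funext x; rw [Complex.real_smul]
    rw [this]
    exact hint _ (Complex.continuous_ofReal.comp hc)
  -- the key estimate
  have key : ∀ ε : ℝ, 0 < ε → ‖∫ x : ℝ, φ x • g x‖ ≤ ε * ∫ x : ℝ, ‖g x‖ := by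
    intro ε hε
    obtain ⟨p, hp⟩ := exists_polynomial_near_continuousMap A B
      (ContinuousMap.restrict (Set.Icc A B) ⟨φ, hφcont⟩) ε hε
    have hb : ∀ x ∈ Set.Icc A B, |φ x - p.eval x| ≤ ε := by
      intro x hx
      have h1 := (p.toContinuousMapOn (Set.Icc A B) -
        ContinuousMap.restrict (Set.Icc A B) ⟨φ, hφcont⟩).norm_coe_le_norm ⟨x, hx⟩
      have h2 : |p.eval x - φ x| ≤ ε := le_trans (by simpa using h1) hp.le
      rwa [abs_sub_comm] at h2
    have hsplit : (∫ x : ℝ, φ x • g x) = ∫ x : ℝ, ((φ x - p.eval x : ℝ) : ℂ) * g x := by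
      have e : ∀ x : ℝ, ((φ x - p.eval x : ℝ) : ℂ) * g x
          = φ x • g x - ((p.eval x : ℝ) : ℂ) * g x := by
        intro x
        rw [Complex.real_smul]
        push_cast
        ring
      rw [integral_congr_ae (Filter.Eventually.of_forall e),
        integral_sub (hsmul φ hφcont) (hint (fun x => ((p.eval x : ℝ) : ℂ))
          (by exact Complex.continuous_ofReal.comp p.continuous)),
        hpoly p, sub_zero]
    rw [hsplit]
    refine le_trans (norm_integral_le_integral_norm _) ?_
    have hmono : ∀ x : ℝ, ‖((φ x - p.eval x : ℝ) : ℂ) * g x‖ ≤ ε * ‖g x‖ := by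
      intro x
      by_cases hx : x ∈ Set.Icc A B
      · rw [norm_mul, Complex.norm_real, Real.norm_eq_abs]
        exact mul_le_mul_of_nonneg_right (hb x hx) (norm_nonneg _)
      · have hgx : g x = 0 := hsupp x fun hmem => hx (hsubK hmem)
        rw [hgx]
        simp
    calc (∫ x : ℝ, ‖((φ x - p.eval x : ℝ) : ℂ) * g x‖)
        ≤ ∫ x : ℝ, ε * ‖g x‖ := by
          exact integral_mono ((hint (fun x => ((φ x - p.eval x : ℝ) : ℂ))
            (by exact Complex.continuous_ofReal.comp (hφcont.sub p.continuous))).norm)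
            (hg.norm.const_mul ε) hmono
      _ = ε * ∫ x : ℝ, ‖g x‖ := by rw [MeasureTheory.integral_const_mul]
  -- deduce the integral vanishes
  have hCnn : (0 : ℝ) ≤ ∫ x : ℝ, ‖g x‖ := integral_nonneg fun x => norm_nonneg _
  have hzero : ‖∫ x : ℝ, φ x • g x‖ = 0 := by
    by_contra hne
    have hpos : 0 < ‖∫ x : ℝ, φ x • g x‖ :=
      lt_of_le_of_ne (norm_nonneg _) (Ne.symm hne)
    set c := ‖∫ x : ℝ, φ x • g x‖
    set C := ∫ x : ℝ, ‖g x‖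
    have h2C : (0:ℝ) < 2 * (C + 1) := by linarith
    have hk := key (c / (2 * (C + 1))) (div_pos hpos h2C)
    rw [div_mul_eq_mul_div, le_div_iff₀ h2C] at hk
    nlinarith
  exact norm_eq_zero.mp hzero

end Stmt18

/-- If a sequence of matrix polynomials is orthogonal with respect to two
matrix weights `W` and `V` with equal zeroth moments, then all the moments of `W` and `V`
agree; if moreover both weights have compact support then `W = V` almost everywhere (extending
both by zero outside their supports). -/
theorem stmt_18 {N : ℕ} (a b c d : EReal)
    (W V : ℝ → Matrix (Fin N) (Fin N) ℂ)
    (hW : IsMatrixWeight a b W) (hV : IsMatrixWeight c d V)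
    (Q : ℕ → Polynomial (Matrix (Fin N) (Fin N) ℂ))
    (hQW : IsOPS a b W Q) (hQV : IsOPS c d V Q)
    (h0 : matIntegral (weightSupport a b) W = matIntegral (weightSupport c d) V) :
    (∀ n : ℕ,
      matIntegral (weightSupport a b) (fun x => ((x : ℂ) ^ n) • W x) =
        matIntegral (weightSupport c d) (fun x => ((x : ℂ) ^ n) • V x)) ∧
    ((∃ a' b' : ℝ, a = (a' : EReal) ∧ b = (b' : EReal)) →
      (∃ c' d' : ℝ, c = (c' : EReal) ∧ d = (d' : EReal)) →
      ∀ᵐ x : ℝ ∂volume,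
        (weightSupport a b).indicator W x = (weightSupport c d).indicator V x) := by
  have hmom := Stmt18.moments_eq hW hV hQW hQV h0
  refine ⟨hmom, ?_⟩
  rintro ⟨a', b', rfl, rfl⟩ ⟨c', d', rfl, rfl⟩
  have hS : weightSupport (a' : EReal) (b' : EReal) = Set.Ioo a' b' :=
    Stmt18.weightSupport_coe a' b'
  have hT : weightSupport (c' : EReal) (d' : EReal) = Set.Ioo c' d' :=
    Stmt18.weightSupport_coe c' d'
  set m : ℝ := min a' c' with hm
  set M : ℝ := max b' d' with hM
  have hWint : ∀ (n : ℕ) (i j : Fin N),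
      Integrable ((Set.Ioo a' b').indicator fun x : ℝ => (x : ℂ) ^ n * W x i j) := by
    intro n i j
    rw [MeasureTheory.integrable_indicator_iff measurableSet_Ioo]
    have h := hW.2.2.2 n i j
    rwa [hS] at h
  have hVint : ∀ (n : ℕ) (i j : Fin N),
      Integrable ((Set.Ioo c' d').indicator fun x : ℝ => (x : ℂ) ^ n * V x i j) := by
    intro n i j
    rw [MeasureTheory.integrable_indicator_iff measurableSet_Ioo]
    have h := hV.2.2.2 n i j
    rwa [hT] at h
  have hkey : ∀ i j : Fin N, ∀ᵐ x : ℝ,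
      (Set.Ioo a' b').indicator (fun x => W x i j) x
        = (Set.Ioo c' d').indicator (fun x => V x i j) x := by
    intro i j
    set g : ℝ → ℂ := fun x => (Set.Ioo a' b').indicator (fun x => W x i j) x
      - (Set.Ioo c' d').indicator (fun x => V x i j) x with hgdef
    have hWint0 : Integrable ((Set.Ioo a' b').indicator fun x : ℝ => W x i j) := by
      have h := hWint 0 i j
      simpa using h
    have hVint0 : Integrable ((Set.Ioo c' d').indicator fun x : ℝ => V x i j) := by
      have h := hVint 0 i j
      simpa using h
    have hg : Integrable g := hWint0.sub hVint0
    have hsupp : ∀ x, x ∉ Set.Icc m M → g x = 0 := by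
      intro x hx
      have hx1 : x ∉ Set.Ioo a' b' := fun hx1 =>
        hx ⟨le_of_lt (lt_of_le_of_lt (min_le_left _ _) hx1.1),
          le_trans hx1.2.le (le_max_left _ _)⟩
      have hx2 : x ∉ Set.Ioo c' d' := fun hx2 =>
        hx ⟨le_of_lt (lt_of_le_of_lt (min_le_right _ _) hx2.1),
          le_trans hx2.2.le (le_max_right _ _)⟩
      simp [hgdef, Set.indicator_of_notMem, hx1, hx2]
    have hmomg : ∀ n : ℕ, (∫ x : ℝ, (x : ℂ) ^ n * g x) = 0 := by
      intro n
      have e : ∀ x : ℝ, (x : ℂ) ^ n * g x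
          = (Set.Ioo a' b').indicator (fun x : ℝ => (x : ℂ) ^ n * W x i j) x
            - (Set.Ioo c' d').indicator (fun x : ℝ => (x : ℂ) ^ n * V x i j) x := by
        intro x
        by_cases h1 : x ∈ Set.Ioo a' b' <;> by_cases h2 : x ∈ Set.Ioo c' d' <;>
          simp [hgdef, h1, h2, mul_sub]
      rw [integral_congr_ae (Filter.Eventually.of_forall e),
        integral_sub (hWint n i j) (hVint n i j),
        MeasureTheory.integral_indicator measurableSet_Ioo,
        MeasureTheory.integral_indicator measurableSet_Ioo]
      have hentry := congrFun (congrFun (hmom n) i) j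
      simp only [matIntegral, Matrix.of_apply, Matrix.smul_apply, smul_eq_mul, hS, hT] at hentry
      rw [sub_eq_zero]
      exact hentry
    have hvan := Stmt18.vanish_of_moments hg hsupp hmomg
    filter_upwards [hvan] with x hx
    exact sub_eq_zero.mp hx
  have hall : ∀ᵐ x : ℝ, ∀ i j : Fin N,
      (Set.Ioo a' b').indicator (fun x => W x i j) x
        = (Set.Ioo c' d').indicator (fun x => V x i j) x :=
    ae_all_iff.mpr fun i => ae_all_iff.mpr fun j => hkey i j
  filter_upwards [hall] with x hx
  rw [hS, hT]
  ext i j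
  have e1 : (Set.Ioo a' b').indicator W x i j
      = (Set.Ioo a' b').indicator (fun x => W x i j) x := by
    by_cases h : x ∈ Set.Ioo a' b' <;> simp [h]
  have e2 : (Set.Ioo c' d').indicator V x i j
      = (Set.Ioo c' d').indicator (fun x => V x i j) x := by
    by_cases h : x ∈ Set.Ioo c' d' <;> simp [h]
  rw [e1, e2]
  exact hx i j
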